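/- (Theorem 2, Q-linear convergence rate) Let ω ∈ (0,2) and θ ≥ 0 be such that δ = 2θ/ω + ((2−ω)/ω)·minᵢ Dᵢᵢ > 0. Let x* be a global minimizer of f, let z be a triangle-proximal point of x, and suppose the error bound ‖x − x*‖ ≤ η·‖x − z‖ holds for some constant η > 0. Then f(z) − f(x*) ≤ (C₁/(1 + C₁))·(f(x) − f(x*)), where C₁ = ((3 + η²)‖C‖ + 2(η² + 1)‖A‖)/δ. In particular, applied along the iterates xᵏ⁺¹ = T(xᵏ), the optimality gap f(xᵏ) − f(x*) decreases Q-linearly with ratio C₁/(1 + C₁) < 1. -/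

import Mathlib

open scoped RealInnerProductSpace
open Matrix Filter

noncomputable section

/-- Euclidean space ℝⁿ. -/
abbrev E (n : ℕ) := EuclideanSpace ℝ (Fin n)

/-- Matrix-vector multiplication, valued in Euclidean space. -/
def mulVecE {n : ℕ} (M : Matrix (Fin n) (Fin n) ℝ) (x : E n) : E n :=
  (WithLp.equiv 2 (Fin n → ℝ)).symm (M.mulVec ((WithLp.equiv 2 (Fin n → ℝ)) x))

/-- Operator (spectral) norm of a matrix. -/
def opNorm {n : ℕ} (M : Matrix (Fin n) (Fin n) ℝ) : ℝ :=
  ‖Matrix.toEuclideanCLM (𝕜 := ℝ) M‖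

/-- The diagonal part `D` of `A`. -/
def Dmat {n : ℕ} (A : Matrix (Fin n) (Fin n) ℝ) : Matrix (Fin n) (Fin n) ℝ :=
  Matrix.diagonal fun i => A i i

/-- The strictly lower triangular part `L` of `A`. -/
def Lmat {n : ℕ} (A : Matrix (Fin n) (Fin n) ℝ) : Matrix (Fin n) (Fin n) ℝ :=
  Matrix.of fun i j => if (j : ℕ) < (i : ℕ) then A i j else 0

/-- `B = L + (1/ω)(D + θI)`. -/
def Bmat {n : ℕ} (ω θ : ℝ) (A : Matrix (Fin n) (Fin n) ℝ) : Matrix (Fin n) (Fin n) ℝ :=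
  Lmat A + ω⁻¹ • (Dmat A + θ • (1 : Matrix (Fin n) (Fin n) ℝ))

/-- `C = Lᵀ + (1/ω)((ω−1)D − θI)`. -/
def Cmat {n : ℕ} (ω θ : ℝ) (A : Matrix (Fin n) (Fin n) ℝ) : Matrix (Fin n) (Fin n) ℝ :=
  (Lmat A)ᵀ + ω⁻¹ • ((ω - 1) • Dmat A - θ • (1 : Matrix (Fin n) (Fin n) ℝ))

/-- `v` is a subgradient of `h` at `z`. -/
def IsSubgradient {n : ℕ} (h : E n → ℝ) (v z : E n) : Prop :=
  ∀ y, h z + ⟪v, y - z⟫ ≤ h y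

/-- The composite objective `f(x) = (1/2)⟨x, Ax⟩ + ⟨b, x⟩ + h(x)`. -/
def fObj {n : ℕ} (A : Matrix (Fin n) (Fin n) ℝ) (b : E n) (h : E n → ℝ) (x : E n) : ℝ :=
  (1/2) * ⟪x, mulVecE A x⟫ + ⟪b, x⟫ + h x

/-- `z` is a triangle-proximal point of `x`: there is a subgradient `v` of `h` at `z`
with `Bz + b + Cx + v = 0`. -/
def IsTriangleProx {n : ℕ} (ω θ : ℝ) (A : Matrix (Fin n) (Fin n) ℝ) (b : E n)
    (h : E n → ℝ) (x z : E n) : Prop :=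
  ∃ v, IsSubgradient h v z ∧
    mulVecE (Bmat ω θ A) z + b + mulVecE (Cmat ω θ A) x + v = 0

namespace MsmAux

variable {n : ℕ}

lemma mulVecE_eq_clm (M : Matrix (Fin n) (Fin n) ℝ) (x : E n) :
    mulVecE M x = Matrix.toEuclideanCLM (𝕜 := ℝ) M x := by
  rw [mulVecE]
  rw [show x = (WithLp.equiv 2 (Fin n → ℝ)).symm ((WithLp.equiv 2 (Fin n → ℝ)) x) by simp]
  rfl

lemma norm_mulVecE_le (M : Matrix (Fin n) (Fin n) ℝ) (x : E n) :
    ‖mulVecE M x‖ ≤ opNorm M * ‖x‖ := by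
  rw [mulVecE_eq_clm]; exact (Matrix.toEuclideanCLM (𝕜 := ℝ) M).le_opNorm x

lemma opNorm_nonneg (M : Matrix (Fin n) (Fin n) ℝ) : 0 ≤ opNorm M := norm_nonneg _

lemma mulVecE_sub_mat (M N : Matrix (Fin n) (Fin n) ℝ) (x : E n) :
    mulVecE (M - N) x = mulVecE M x - mulVecE N x := by
  simp [mulVecE_eq_clm, map_sub]

lemma mulVecE_sub_vec (M : Matrix (Fin n) (Fin n) ℝ) (x y : E n) :
    mulVecE M (x - y) = mulVecE M x - mulVecE M y := by
  simp [mulVecE_eq_clm, map_sub]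

lemma inner_mulVecE (M : Matrix (Fin n) (Fin n) ℝ) (u v : E n) :
    ⟪u, mulVecE M v⟫ = (fun i => u i) ⬝ᵥ (M.mulVec (fun j => v j)) := by
  simp [mulVecE, PiLp.inner_apply, RCLike.inner_apply, WithLp.equiv, dotProduct]
  exact Finset.sum_congr rfl fun _ _ => mul_comm _ _

lemma inner_mulVecE_transpose (M : Matrix (Fin n) (Fin n) ℝ) (u v : E n) :
    ⟪u, mulVecE Mᵀ v⟫ = ⟪v, mulVecE M u⟫ := by
  rw [inner_mulVecE, inner_mulVecE, Matrix.dotProduct_mulVec, Matrix.vecMul_transpose,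
    dotProduct_comm]

lemma inner_mulVecE_symm {A : Matrix (Fin n) (Fin n) ℝ} (hA : A.IsSymm) (u v : E n) :
    ⟪u, mulVecE A v⟫ = ⟪v, mulVecE A u⟫ := by
  conv_lhs => rw [← hA]
  exact inner_mulVecE_transpose A u v

lemma Bmat_eq {A : Matrix (Fin n) (Fin n) ℝ} (hA : A.IsSymm) {ω : ℝ} (θ : ℝ) (hω : ω ≠ 0) :
    Bmat ω θ A = A - Cmat ω θ A := by
  ext i j
  have hs : A j i = A i j := hA.apply i j
  simp only [Bmat, Cmat, Dmat, Lmat, Matrix.sub_apply, Matrix.add_apply, Matrix.smul_apply,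
    Matrix.transpose_apply, Matrix.diagonal_apply, Matrix.one_apply, Matrix.of_apply,
    smul_eq_mul]
  rcases lt_trichotomy (i : ℕ) (j : ℕ) with hij | hij | hij
  · have h1 : ¬ (j:ℕ) < (i:ℕ) := by omega
    have h2 : i ≠ j := fun e => by simp [e] at hij
    have h3 : j ≠ i := fun e => by simp [e] at hij
    simp [hij, h1, h2, h3, hs]
  · have h2 : i = j := Fin.ext hij
    subst h2
    simp only [lt_irrefl, if_false, if_pos rfl, if_true]
    field_simp
    ring
  · have h1 : ¬ (i:ℕ) < (j:ℕ) := by omega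
    have h2 : i ≠ j := fun e => by simp [e] at hij
    have h3 : j ≠ i := fun e => by simp [e] at hij
    simp [hij, h1, h2, h3]

lemma Mmat_eq {A : Matrix (Fin n) (Fin n) ℝ} (hA : A.IsSymm) {ω : ℝ} (θ : ℝ) (hω : ω ≠ 0) :
    A - Cmat ω θ A - (Cmat ω θ A)ᵀ
      = ((2 - ω)/ω) • Dmat A + (2*θ/ω) • (1 : Matrix (Fin n) (Fin n) ℝ) := by
  ext i j
  have hs : A j i = A i j := hA.apply i j
  simp only [Cmat, Dmat, Lmat, Matrix.sub_apply, Matrix.add_apply, Matrix.smul_apply,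
    Matrix.transpose_apply, Matrix.diagonal_apply, Matrix.one_apply, Matrix.of_apply,
    smul_eq_mul]
  rcases lt_trichotomy (i : ℕ) (j : ℕ) with hij | hij | hij
  · have h1 : ¬ (j:ℕ) < (i:ℕ) := by omega
    have h2 : i ≠ j := fun e => by simp [e] at hij
    have h3 : j ≠ i := fun e => by simp [e] at hij
    simp [hij, h1, h2, h3, hs]
  · have h2 : i = j := Fin.ext hij
    subst h2
    simp only [lt_irrefl, if_false, if_pos rfl, if_true]
    field_simp
    ring
  · have h1 : ¬ (i:ℕ) < (j:ℕ) := by omega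
    have h2 : i ≠ j := fun e => by simp [e] at hij
    have h3 : j ≠ i := fun e => by simp [e] at hij
    simp [hij, h1, h2, h3, hs]

lemma diag_lower (A : Matrix (Fin n) (Fin n) ℝ) (c c' δ : ℝ) (hc : ∀ i, δ ≤ c * A i i + c')
    (w : E n) :
    δ * ‖w‖^2 ≤ ⟪w, mulVecE (c • Dmat A + c' • (1 : Matrix (Fin n) (Fin n) ℝ)) w⟫ := by
  rw [inner_mulVecE]
  have hn2 : ‖w‖^2 = ∑ i, (w i)^2 := by
    rw [EuclideanSpace.norm_eq, Real.sq_sqrt (Finset.sum_nonneg fun i _ => sq_nonneg _)]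
    simp [Real.norm_eq_abs, sq_abs]
  rw [hn2, Finset.mul_sum]
  unfold dotProduct
  refine Finset.sum_le_sum fun i _ => ?_
  have : ((c • Dmat A + c' • (1 : Matrix (Fin n) (Fin n) ℝ)).mulVec (fun j => w j)) i
      = (c * A i i + c') * w i := by
    simp [Matrix.add_mulVec, Matrix.smul_mulVec, Dmat, Matrix.mulVec_diagonal,
      Matrix.one_mulVec]
    ring
  rw [this]
  nlinarith [hc i, sq_nonneg (w i)]

set_option maxHeartbeats 1000000 in
lemma identity1 {A : Matrix (Fin n) (Fin n) ℝ} (hA : A.IsSymm) {ω : ℝ} (θ : ℝ) (hω : ω ≠ 0)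
    (x z : E n) :
    (1/2)*⟪x, mulVecE A x⟫ - (1/2)*⟪z, mulVecE A z⟫
      - ⟪mulVecE (Bmat ω θ A) z, x - z⟫ - ⟪mulVecE (Cmat ω θ A) x, x - z⟫
    = (1/2)*⟪x - z, mulVecE (A - Cmat ω θ A - (Cmat ω θ A)ᵀ) (x - z)⟫ := by
  rw [Bmat_eq hA θ hω]
  simp only [mulVecE_sub_mat, mulVecE_sub_vec, inner_sub_left, inner_sub_right]
  linear_combination (1 : ℝ) * real_inner_comm (mulVecE A z) x
    - real_inner_comm (mulVecE A z) z
    - (1/2 : ℝ) * inner_mulVecE_symm hA x z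
    - real_inner_comm (mulVecE (Cmat ω θ A) z) x
    + real_inner_comm (mulVecE (Cmat ω θ A) z) z
    + real_inner_comm (mulVecE (Cmat ω θ A) x) x
    - real_inner_comm (mulVecE (Cmat ω θ A) x) z
    + (1/2 : ℝ) * inner_mulVecE_transpose (Cmat ω θ A) x x
    - (1/2 : ℝ) * inner_mulVecE_transpose (Cmat ω θ A) x z
    - (1/2 : ℝ) * inner_mulVecE_transpose (Cmat ω θ A) z x
    + (1/2 : ℝ) * inner_mulVecE_transpose (Cmat ω θ A) z z

set_option maxHeartbeats 1000000 in
lemma identity2 {A : Matrix (Fin n) (Fin n) ℝ} (hA : A.IsSymm) {ω : ℝ} (θ : ℝ) (hω : ω ≠ 0)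
    (x z p : E n) :
    (1/2)*⟪z, mulVecE A z⟫ - (1/2)*⟪p, mulVecE A p⟫
      - ⟪mulVecE (Bmat ω θ A) z, z - p⟫ - ⟪mulVecE (Cmat ω θ A) x, z - p⟫
    = ⟪mulVecE (Cmat ω θ A) (z - x), z - p⟫ - (1/2)*⟪z - p, mulVecE A (z - p)⟫ := by
  rw [Bmat_eq hA θ hω]
  simp only [mulVecE_sub_mat, mulVecE_sub_vec, inner_sub_left, inner_sub_right]
  linear_combination (1 : ℝ) * real_inner_comm (mulVecE A z) z
    - real_inner_comm (mulVecE A z) p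
    - (1/2 : ℝ) * inner_mulVecE_symm hA z p

end MsmAux

open MsmAux

set_option maxHeartbeats 1000000 in
/-- Theorem 2, Q-linear convergence rate. -/
theorem msm_q_linear_rate {n : ℕ} (hn : 0 < n)
    (A : Matrix (Fin n) (Fin n) ℝ) (hA : A.IsSymm) (b : E n) (h : E n → ℝ)
    (ω θ : ℝ) (hω : ω ∈ Set.Ioo (0 : ℝ) 2) (hθ : 0 ≤ θ)
    (δ : ℝ) (hδ : δ = 2 * θ / ω + (2 - ω) / ω * ⨅ i, A i i) (hδpos : 0 < δ)
    (xstar : E n) (hxstar : ∀ y : E n, fObj A b h xstar ≤ fObj A b h y)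
    (x z : E n) (hz : IsTriangleProx ω θ A b h x z)
    (η : ℝ) (hη : 0 < η) (herr : ‖x - xstar‖ ≤ η * ‖x - z‖)
    (C₁ : ℝ)
    (hC₁ : C₁ = ((3 + η ^ 2) * opNorm (Cmat ω θ A)
        + 2 * (η ^ 2 + 1) * opNorm A) / δ) :
    fObj A b h z - fObj A b h xstar
      ≤ (C₁ / (1 + C₁)) * (fObj A b h x - fObj A b h xstar) := by
  obtain ⟨hω0, hω2⟩ := hω
  have hωne : ω ≠ 0 := ne_of_gt hω0
  obtain ⟨v, hv, heq⟩ := hz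
  have hveq : v = -(mulVecE (Bmat ω θ A) z + b + mulVecE (Cmat ω θ A) x) := by
    rw [eq_neg_iff_add_eq_zero, add_comm]
    exact heq
  have hNe : Nonempty (Fin n) := ⟨⟨0, hn⟩⟩
  have hcnn : (0:ℝ) ≤ (2 - ω)/ω := div_nonneg (by linarith) (le_of_lt hω0)
  have hcoef : ∀ i, δ ≤ ((2 - ω)/ω) * A i i + 2*θ/ω := by
    intro i
    have hinf : (⨅ j, A j j) ≤ A i i := ciInf_le (Finite.bddBelow_range _) i
    have h2 := mul_le_mul_of_nonneg_left hinf hcnn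
    rw [hδ]
    linarith only [h2]
  -- Step I : δ/2 ‖x-z‖² ≤ f x - f z
  have hinner_v1 : ⟪v, x - z⟫
      = -(⟪mulVecE (Bmat ω θ A) z, x - z⟫ + ⟪b, x - z⟫ + ⟪mulVecE (Cmat ω θ A) x, x - z⟫) := by
    rw [hveq, inner_neg_left]
    simp [inner_add_left]
  have hsub1 : h z - (⟪mulVecE (Bmat ω θ A) z, x - z⟫ + ⟪b, x - z⟫
      + ⟪mulVecE (Cmat ω θ A) x, x - z⟫) ≤ h x := by
    have hx1 := hv x
    rw [hinner_v1] at hx1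
    linarith only [hx1]
  have hid1 := identity1 hA θ hωne x z
  have hlow : δ * ‖x - z‖^2
      ≤ ⟪x - z, mulVecE (A - Cmat ω θ A - (Cmat ω θ A)ᵀ) (x - z)⟫ := by
    rw [Mmat_eq hA θ hωne]
    exact diag_lower A _ _ δ hcoef (x - z)
  have hbxz : ⟪b, x - z⟫ = ⟪b, x⟫ - ⟪b, z⟫ := inner_sub_right b x z
  have hStepI : δ/2 * ‖x - z‖^2 ≤ fObj A b h x - fObj A b h z := by
    simp only [fObj]
    linarith only [hsub1, hid1, hlow, hbxz]
  -- Step II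
  have hinner_v2 : ⟪v, xstar - z⟫
      = ⟪mulVecE (Bmat ω θ A) z, z - xstar⟫ + (⟪b, z⟫ - ⟪b, xstar⟫)
        + ⟪mulVecE (Cmat ω θ A) x, z - xstar⟫ := by
    rw [hveq, inner_neg_left]
    simp only [inner_add_left]
    have e1 : ⟪mulVecE (Bmat ω θ A) z, xstar - z⟫ = -⟪mulVecE (Bmat ω θ A) z, z - xstar⟫ := by
      rw [← inner_neg_right]; congr 1; abel
    have e2 : ⟪mulVecE (Cmat ω θ A) x, xstar - z⟫ = -⟪mulVecE (Cmat ω θ A) x, z - xstar⟫ := by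
      rw [← inner_neg_right]; congr 1; abel
    have e3 : ⟪b, xstar - z⟫ = ⟪b, xstar⟫ - ⟪b, z⟫ := inner_sub_right b xstar z
    rw [e1, e2, e3]
    ring
  have hsub2 : h z - h xstar ≤ -⟪mulVecE (Bmat ω θ A) z, z - xstar⟫
      - (⟪b, z⟫ - ⟪b, xstar⟫) - ⟪mulVecE (Cmat ω θ A) x, z - xstar⟫ := by
    have hx2 := hv xstar
    rw [hinner_v2] at hx2
    linarith only [hx2]
  have hid2 := identity2 hA θ hωne x z xstar
  have hunn : (0:ℝ) ≤ ‖z - xstar‖ := norm_nonneg _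
  have hsnn : (0:ℝ) ≤ ‖x - z‖ := norm_nonneg _
  have htu : ‖z - xstar‖ ≤ (1 + η) * ‖x - z‖ := by
    have h1 : z - xstar = (z - x) + (x - xstar) := by abel
    have h2 : ‖(z - x) + (x - xstar)‖ ≤ ‖z - x‖ + ‖x - xstar‖ := norm_add_le _ _
    have h3 : ‖z - x‖ = ‖x - z‖ := norm_sub_rev z x
    have h4 : (1 + η) * ‖x - z‖ = ‖x - z‖ + η * ‖x - z‖ := by ring
    rw [h1, h4]
    linarith only [h2, h3, herr]
  have hCbd : ⟪mulVecE (Cmat ω θ A) (z - x), z - xstar⟫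
      ≤ opNorm (Cmat ω θ A) * ‖x - z‖ * ‖z - xstar‖ := by
    have h1 := real_inner_le_norm (mulVecE (Cmat ω θ A) (z - x)) (z - xstar)
    have h2 : ‖mulVecE (Cmat ω θ A) (z - x)‖ ≤ opNorm (Cmat ω θ A) * ‖z - x‖ :=
      norm_mulVecE_le _ _
    have h3 : ‖z - x‖ = ‖x - z‖ := norm_sub_rev z x
    have h4 := mul_le_mul_of_nonneg_right h2 hunn
    rw [h3] at h4
    linarith only [h1, h4]
  have hAbd : -⟪z - xstar, mulVecE A (z - xstar)⟫ ≤ opNorm A * ‖z - xstar‖^2 := by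
    have h1 := abs_real_inner_le_norm (z - xstar) (mulVecE A (z - xstar))
    have h2 : ‖mulVecE A (z - xstar)‖ ≤ opNorm A * ‖z - xstar‖ := norm_mulVecE_le _ _
    have h3 := abs_le.mp h1
    have h4 := mul_le_mul_of_nonneg_left h2 hunn
    have h5 : ‖z - xstar‖ * (opNorm A * ‖z - xstar‖) = opNorm A * ‖z - xstar‖^2 := by ring
    linarith only [h3.1, h4, h5]
  have hStepII : fObj A b h z - fObj A b h xstar
      ≤ opNorm (Cmat ω θ A) * ‖x - z‖ * ‖z - xstar‖ + (opNorm A / 2) * ‖z - xstar‖^2 := by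
    simp only [fObj]
    linarith only [hsub2, hid2, hCbd, hAbd]
  -- combine
  have hgz0 : 0 ≤ fObj A b h z - fObj A b h xstar := by linarith only [hxstar z]
  set ca := opNorm (Cmat ω θ A) with hca
  set da := opNorm A with hda
  set s := ‖x - z‖ with hsx
  set t := ‖z - xstar‖ with htx
  set fx := fObj A b h x with hfx
  set fz := fObj A b h z with hfz
  set fs := fObj A b h xstar with hfs
  have hCn : 0 ≤ ca := hca ▸ opNorm_nonneg (Cmat ω θ A)
  have hAn : 0 ≤ da := hda ▸ opNorm_nonneg A
  have hC1nn : 0 ≤ C₁ := by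
    rw [hC₁]
    apply div_nonneg _ (le_of_lt hδpos)
    exact add_nonneg (mul_nonneg (by positivity) hCn) (mul_nonneg (by positivity) hAn)
  have hC1δ : C₁ * δ = (3 + η ^ 2) * ca + 2 * (η ^ 2 + 1) * da := by
    rw [hC₁, div_mul_cancel₀ _ (ne_of_gt hδpos)]
  have hbound2 : fz - fs ≤ C₁ * (δ/2) * s^2 := by
    have hKs : ca * s * t + (da / 2) * t^2
        ≤ (ca * (1+η) + (da / 2) * (1+η)^2) * s^2 := by
      have f1 : ca * s * t ≤ ca * s * ((1 + η) * s) :=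
        mul_le_mul_of_nonneg_left htu (mul_nonneg hCn hsnn)
      have f2 : (da / 2) * t^2 ≤ (da / 2) * ((1 + η) * s)^2 :=
        mul_le_mul_of_nonneg_left (pow_le_pow_left₀ hunn htu 2) (by linarith only [hAn])
      have f3 : ca * s * ((1 + η) * s) + (da / 2) * ((1 + η) * s)^2
          = (ca * (1+η) + (da / 2) * (1+η)^2) * s^2 := by ring
      linarith only [f1, f2, f3]
    have hKC : ca * (1+η) + (da / 2) * (1+η)^2 ≤ C₁ * (δ/2) := by
      have e : C₁ * (δ/2) = ((3 + η ^ 2) * ca + 2 * (η ^ 2 + 1) * da)/2 := by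
        rw [show C₁ * (δ/2) = (C₁ * δ)/2 by ring, hC1δ]
      rw [e]
      have g1 : (1 + η) ≤ (3 + η^2)/2 := by linarith only [sq_nonneg (η - 1)]
      have g2 : (1 + η)^2 ≤ 2*(η^2 + 1) := by linarith only [sq_nonneg (η - 1)]
      have g1' := mul_le_mul_of_nonneg_left g1 hCn
      have g2' := mul_le_mul_of_nonneg_left g2 (by linarith only [hAn] : (0:ℝ) ≤ da / 2)
      linarith only [g1', g2']
    calc fz - fs ≤ ca * s * t + (da / 2) * t^2 := hStepII
      _ ≤ (ca * (1+η) + (da / 2) * (1+η)^2) * s^2 := hKs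
      _ ≤ C₁ * (δ/2) * s^2 := mul_le_mul_of_nonneg_right hKC (sq_nonneg _)
  have hgz : fz - fs ≤ C₁ * (fx - fz) := by
    calc fz - fs ≤ C₁ * (δ/2) * s^2 := hbound2
      _ = C₁ * (δ/2 * s^2) := by ring
      _ ≤ C₁ * (fx - fz) := mul_le_mul_of_nonneg_left hStepI hC1nn
  have h1C : (0:ℝ) < 1 + C₁ := by linarith only [hC1nn]
  rw [div_mul_eq_mul_div, le_div_iff₀ h1C]
  linarith only [hgz, mul_le_mul_of_nonneg_left hgz hC1nn]
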